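/- Let (X, cl) be a pregeometry and let U, V, W be pairwise disjoint nonempty finite subsets of X such that U ∪ V and V ∪ W are minimal dependent and dim(U ∪ V ∪ W) = |U| + |V| + |W| − 2. Then for every u ∈ U and every v ∈ V, the set (U \ {u}) ∪ (V \ {v}) ∪ W is independent and is a basis of U ∪ V ∪ W; symmetrically, for every v ∈ V and w ∈ W, the set U ∪ (V \ {v}) ∪ (W \ {w}) is independent and is a basis of U ∪ V ∪ W. -/

import Mathlib

/-- A pregeometry: a closure operator with reflexivity, monotonicity, idempotence,
finite character and the exchange property. -/
structure Pregeom (X : Type*) where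
  cl : Set X → Set X
  subset_cl : ∀ A : Set X, A ⊆ cl A
  mono : ∀ {A B : Set X}, A ⊆ B → cl A ⊆ cl B
  idem : ∀ A : Set X, cl (cl A) = cl A
  finChar : ∀ {a : X} {A : Set X}, a ∈ cl A → ∃ A₀ ⊆ A, A₀.Finite ∧ a ∈ cl A₀
  exchange : ∀ {a b : X} {A : Set X}, a ∈ cl (A ∪ {b}) → a ∉ cl A → b ∈ cl (A ∪ {a})

namespace Pregeom

variable {X : Type*}

/-- A set is independent if no element lies in the closure of the remaining elements. -/
def Indep (G : Pregeom X) (Y : Set X) : Prop := ∀ y ∈ Y, y ∉ G.cl (Y \ {y})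

/-- A set is dependent if it is not independent. -/
def Dep (G : Pregeom X) (Y : Set X) : Prop := ¬ G.Indep Y

/-- A set is minimal dependent if it is dependent and every proper subset is independent. -/
def MinDep (G : Pregeom X) (Y : Set X) : Prop := G.Dep Y ∧ ∀ Z ⊂ Y, G.Indep Z

/-- `Z` is a basis of `Y`: an independent subset of `Y` whose closure contains `Y`. -/
def IsBasis (G : Pregeom X) (Z Y : Set X) : Prop := Z ⊆ Y ∧ G.Indep Z ∧ Y ⊆ G.cl Z

end Pregeom

namespace Pregeom
variable {X : Type*} (G : Pregeom X)

lemma cl_le {A B : Set X} (h : A ⊆ G.cl B) : G.cl A ⊆ G.cl B := by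
  have := G.mono h
  rwa [G.idem] at this

lemma indep_mono {A B : Set X} (hB : G.Indep B) (h : A ⊆ B) : G.Indep A := by
  intro a ha hc
  exact hB a (h ha) (G.mono (Set.diff_subset_diff_left h) hc)

/-- every element of a circuit is in the closure of the rest -/
lemma circuit_cl {C : Set X} (hC : G.MinDep C) {x : X} (hx : x ∈ C) :
    x ∈ G.cl (C \ {x}) := by
  obtain ⟨hdep, hmin⟩ := hC
  rw [Dep, Indep] at hdep
  push_neg at hdep
  obtain ⟨c, hcC, hc⟩ := hdep
  by_cases hxc : x = c
  · subst hxc; exact hc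
  · have hDx : c ∉ G.cl ((C \ {c}) \ {x}) := by
      intro h
      have hsub : C \ {x} ⊂ C := by
        refine ⟨Set.diff_subset, fun hss => ?_⟩
        have := hss hx
        simp at this
      have hind := hmin _ hsub
      have : c ∈ C \ {x} := ⟨hcC, by simp [Ne.symm hxc]⟩
      refine hind c this ?_
      have : (C \ {x}) \ {c} = (C \ {c}) \ {x} := by
        ext y; simp; tauto
      rw [this]; exact h
    have heq : C \ {c} = ((C \ {c}) \ {x}) ∪ {x} := by
      ext y
      simp only [Set.mem_diff, Set.mem_union, Set.mem_singleton_iff]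
      constructor
      · rintro ⟨h1, h2⟩; by_cases hy : y = x
        · exact Or.inr hy
        · exact Or.inl ⟨⟨h1, h2⟩, hy⟩
      · rintro (⟨⟨h1, h2⟩, _⟩ | rfl)
        · exact ⟨h1, h2⟩
        · exact ⟨hx, fun h => hxc h⟩
    rw [heq] at hc
    have := G.exchange hc hDx
    have heq2 : (C \ {c}) \ {x} ∪ {c} = C \ {x} := by
      ext y
      simp only [Set.mem_diff, Set.mem_union, Set.mem_singleton_iff]
      constructor
      · rintro (⟨⟨h1, h2⟩, h3⟩ | rfl)
        · exact ⟨h1, h3⟩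
        · exact ⟨hcC, fun h => hxc h.symm⟩
      · rintro ⟨h1, h2⟩; by_cases hy : y = c
        · exact Or.inr hy
        · exact Or.inl ⟨⟨h1, hy⟩, h2⟩
    rwa [heq2] at this

/-- finite chain lemma: find the step where x enters the closure -/
lemma find_step {B C : Set X} (hC : C.Finite) {x : X} :
    x ∈ G.cl (B ∪ C) → x ∉ G.cl B →
    ∃ c ∈ C, ∃ C' ⊆ C, c ∉ C' ∧ x ∈ G.cl (B ∪ C' ∪ {c}) ∧ x ∉ G.cl (B ∪ C') := by
  refine Set.Finite.induction_on (motive := fun C _ => x ∈ G.cl (B ∪ C) → x ∉ G.cl B →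
      ∃ c ∈ C, ∃ C' ⊆ C, c ∉ C' ∧ x ∈ G.cl (B ∪ C' ∪ {c}) ∧ x ∉ G.cl (B ∪ C')) C hC ?_ ?_
  · intro h1 h2; rw [Set.union_empty] at h1; exact absurd h1 h2
  case _ =>
    intro a s ha hs ih
    intro h1 h2
    by_cases hxs : x ∈ G.cl (B ∪ s)
    · obtain ⟨c, hc, C', hC', hcC', hx1, hx2⟩ := ih hxs h2
      exact ⟨c, Set.mem_insert_of_mem _ hc, C', hC'.trans (Set.subset_insert _ _), hcC', hx1, hx2⟩
    · refine ⟨a, Set.mem_insert _ _, s, Set.subset_insert _ _, ha, ?_, hxs⟩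
      have : B ∪ insert a s = B ∪ s ∪ {a} := by
        ext y
        simp only [Set.mem_union, Set.mem_insert_iff, Set.mem_singleton_iff]
        tauto
      rwa [this] at h1

/-- Steinitz: an independent set contained in cl A has at most |A| elements -/
lemma steinitz_aux : ∀ k : ℕ, ∀ I A : Set X, I.Finite → A.Finite → G.Indep I →
    I ⊆ G.cl A → (I \ A).ncard ≤ k → I.ncard ≤ A.ncard := by
  intro k
  induction k with
  | zero =>
    intro I A hIf hAf hI hIA hk
    have : (I \ A).ncard = 0 := Nat.le_zero.mp hk
    have hsub : I ⊆ A := by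
      have := (Set.ncard_eq_zero (hIf.diff)).mp this
      rwa [Set.diff_eq_empty] at this
    exact Set.ncard_le_ncard hsub hAf
  | succ k ih =>
    intro I A hIf hAf hI hIA hk
    by_cases hIA' : I ⊆ A
    · exact Set.ncard_le_ncard hIA' hAf
    · obtain ⟨x, hxI, hxA⟩ := Set.not_subset.mp hIA'
      have hxcl : x ∉ G.cl (A ∩ I) := by
        intro h
        refine hI x hxI (G.mono ?_ h)
        intro y hy
        simp only [Set.mem_diff, Set.mem_singleton_iff]
        exact ⟨hy.2, fun he => hxA (he ▸ hy.1)⟩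
      have hxclA : x ∈ G.cl ((A ∩ I) ∪ (A \ I)) := by
        rw [Set.inter_union_diff]; exact hIA hxI
      obtain ⟨a, haC, C', hC', haC', hx1, hx2⟩ := G.find_step (hAf.diff) hxclA hxcl
      have hax : a ∈ G.cl ((A ∩ I ∪ C') ∪ {x}) := G.exchange hx1 hx2
      have haI : a ∉ I := (Set.mem_diff _ |>.mp haC).2
      have haA : a ∈ A := (Set.mem_diff _ |>.mp haC).1
      set A' : Set X := (A \ {a}) ∪ {x} with hA'
      have hsubA' : A ∩ I ∪ C' ⊆ A \ {a} := by
        intro y hy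
        simp only [Set.mem_diff, Set.mem_singleton_iff]
        rcases hy with hy | hy
        · exact ⟨hy.1, fun he => haI (he ▸ hy.2)⟩
        · have h' := Set.mem_diff _ |>.mp (hC' hy)
          exact ⟨h'.1, fun he => haC' (he ▸ hy)⟩
      have haA' : a ∈ G.cl A' := G.mono (Set.union_subset_union_left _ hsubA') hax
      have hAsub : A ⊆ G.cl A' := by
        intro y hy
        by_cases hya : y = a
        · subst hya; exact haA'
        · exact G.subset_cl _ (Or.inl ⟨hy, hya⟩)
      have hIclA' : I ⊆ G.cl A' := fun y hy => Pregeom.cl_le G hAsub (hIA hy)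
      have hA'f : A'.Finite := (hAf.diff).union (Set.finite_singleton _)
      have hdiff : I \ A' = (I \ A) \ {x} := by
        rw [hA']
        ext y
        constructor
        · intro hy
          obtain ⟨h1, h2⟩ := (Set.mem_diff _).mp hy
          refine (Set.mem_diff _).mpr ⟨(Set.mem_diff _).mpr ⟨h1, fun hyA => h2 ?_⟩,
            fun hyx => h2 (Or.inr hyx)⟩
          exact Or.inl ((Set.mem_diff _).mpr
            ⟨hyA, fun he => haI (Set.mem_singleton_iff.mp he ▸ h1)⟩)
        · intro hy
          obtain ⟨h12, h3⟩ := (Set.mem_diff _).mp hy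
          obtain ⟨h1, h2⟩ := (Set.mem_diff _).mp h12
          refine (Set.mem_diff _).mpr ⟨h1, fun hc => ?_⟩
          rcases hc with hc | hc
          · exact h2 ((Set.mem_diff _).mp hc).1
          · exact h3 hc
      have hkd : (I \ A').ncard ≤ k := by
        rw [hdiff]
        have hxd : x ∈ I \ A := ⟨hxI, hxA⟩
        have := Set.ncard_diff_singleton_lt_of_mem hxd (hIf.diff)
        omega
      have hcard : A'.ncard ≤ A.ncard := by
        have h1 : A'.ncard ≤ (A \ {a}).ncard + 1 := by
          calc A'.ncard ≤ (A \ {a}).ncard + ({x} : Set X).ncard := Set.ncard_union_le _ _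
            _ = (A \ {a}).ncard + 1 := by rw [Set.ncard_singleton]
        have h2 : (A \ {a}).ncard = A.ncard - 1 := Set.ncard_diff_singleton_of_mem haA
        have h3 : 0 < A.ncard := (Set.ncard_pos hAf).mpr ⟨a, haA⟩
        omega
      exact le_trans (ih I A' hIf hA'f hI hIclA' hkd) hcard

lemma steinitz {I A : Set X} (hIf : I.Finite) (hAf : A.Finite) (hI : G.Indep I)
    (hIA : I ⊆ G.cl A) : I.ncard ≤ A.ncard :=
  G.steinitz_aux (I \ A).ncard I A hIf hAf hI hIA le_rfl

end Pregeom

namespace Pregeom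
variable {X : Type*} (G : Pregeom X)

lemma span_basis {T S Z : Set X} (hTS : T ⊆ S) (hSfin : S.Finite)
    (hZ : G.IsBasis Z S) (hspan : S ⊆ G.cl T) (hcard : T.ncard = Z.ncard) :
    G.Indep T ∧ G.IsBasis T S := by
  have hTfin : T.Finite := hSfin.subset hTS
  have hZfin : Z.Finite := hSfin.subset hZ.1
  have hind : G.Indep T := by
    by_contra hdep
    rw [Indep] at hdep; push_neg at hdep
    obtain ⟨t, htT, ht⟩ := hdep
    have hTsub : T ⊆ G.cl (T \ {t}) := by
      intro y hy
      by_cases hyt : y = t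
      · subst hyt; exact ht
      · exact G.subset_cl _ ((Set.mem_diff _).mpr ⟨hy, by simpa using hyt⟩)
    have hScl : S ⊆ G.cl (T \ {t}) := fun y hy => G.cl_le hTsub (hspan hy)
    have hle := G.steinitz hZfin (hTfin.diff) hZ.2.1 (fun y hy => hScl (hZ.1 hy))
    have h1 : (T \ {t}).ncard = T.ncard - 1 := Set.ncard_diff_singleton_of_mem htT
    have h2 : 0 < T.ncard := (Set.ncard_pos hTfin).mpr ⟨t, htT⟩
    omega
  exact ⟨hind, hTS, hind, hspan⟩

end Pregeom

theorem stmt6 {X : Type*} (G : Pregeom X) (U V W : Set X)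
    (hUfin : U.Finite) (hVfin : V.Finite) (hWfin : W.Finite)
    (hUne : U.Nonempty) (hVne : V.Nonempty) (hWne : W.Nonempty)
    (hUV : Disjoint U V) (hUW : Disjoint U W) (hVW : Disjoint V W)
    (hmd1 : G.MinDep (U ∪ V)) (hmd2 : G.MinDep (V ∪ W))
    (hdim : ∃ Z : Set X, G.IsBasis Z (U ∪ V ∪ W) ∧
      Z.ncard = U.ncard + V.ncard + W.ncard - 2) :
    (∀ u ∈ U, ∀ v ∈ V,
        G.Indep ((U \ {u}) ∪ (V \ {v}) ∪ W) ∧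
        G.IsBasis ((U \ {u}) ∪ (V \ {v}) ∪ W) (U ∪ V ∪ W)) ∧
    (∀ v ∈ V, ∀ w ∈ W,
        G.Indep (U ∪ (V \ {v}) ∪ (W \ {w})) ∧
        G.IsBasis (U ∪ (V \ {v}) ∪ (W \ {w})) (U ∪ V ∪ W)) := by
  obtain ⟨Z, hZb, hZc⟩ := hdim
  have hSfin : (U ∪ V ∪ W).Finite := (hUfin.union hVfin).union hWfin
  have haU : 0 < U.ncard := (Set.ncard_pos hUfin).mpr hUne
  have hbV : 0 < V.ncard := (Set.ncard_pos hVfin).mpr hVne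
  have hcW : 0 < W.ncard := (Set.ncard_pos hWfin).mpr hWne
  constructor
  · intro u hu v hv
    set T : Set X := (U \ {u}) ∪ (V \ {v}) ∪ W with hT
    have hTS : T ⊆ U ∪ V ∪ W := by
      apply Set.union_subset_union_left
      exact Set.union_subset_union Set.diff_subset Set.diff_subset
    -- spanning
    have hvW : v ∉ W := Set.disjoint_left.mp hVW hv
    have huV : u ∉ V := Set.disjoint_left.mp hUV hu
    have hVWv : (V ∪ W) \ {v} = (V \ {v}) ∪ W := by
      rw [Set.union_diff_distrib, Set.diff_singleton_eq_self hvW]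
    have hvT : v ∈ G.cl T := by
      have := G.circuit_cl hmd2 (Set.mem_union_left _ hv)
      rw [hVWv] at this
      exact G.mono (Set.union_subset_union_left _ Set.subset_union_right) this
    have hVT : V ⊆ G.cl T := by
      intro y hy
      by_cases hyv : y = v
      · subst hyv; exact hvT
      · exact G.subset_cl _ (Or.inl (Or.inr ((Set.mem_diff _).mpr ⟨hy, by simpa using hyv⟩)))
    have hUVu : (U ∪ V) \ {u} = (U \ {u}) ∪ V := by
      rw [Set.union_diff_distrib, Set.diff_singleton_eq_self huV]
    have huT : u ∈ G.cl T := by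
      have h1 := G.circuit_cl hmd1 (Set.mem_union_left _ hu)
      rw [hUVu] at h1
      refine G.cl_le ?_ h1
      rintro y (hy | hy)
      · exact G.subset_cl _ (Or.inl (Or.inl hy))
      · exact hVT hy
    have hspan : U ∪ V ∪ W ⊆ G.cl T := by
      rintro y ((hy | hy) | hy)
      · by_cases hyu : y = u
        · subst hyu; exact huT
        · exact G.subset_cl _ (Or.inl (Or.inl ((Set.mem_diff _).mpr ⟨hy, by simpa using hyu⟩)))
      · exact hVT hy
      · exact G.subset_cl _ (Or.inr hy)
    -- cardinality
    have hd1 : Disjoint (U \ {u}) (V \ {v}) := (hUV.mono Set.diff_subset Set.diff_subset)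
    have hd2 : Disjoint ((U \ {u}) ∪ (V \ {v})) W :=
      Set.disjoint_union_left.mpr ⟨hUW.mono_left Set.diff_subset, hVW.mono_left Set.diff_subset⟩
    have hcT : T.ncard = (U.ncard - 1) + (V.ncard - 1) + W.ncard := by
      rw [hT, Set.ncard_union_eq hd2 ((hUfin.diff).union (hVfin.diff)) hWfin,
        Set.ncard_union_eq hd1 (hUfin.diff) (hVfin.diff),
        Set.ncard_diff_singleton_of_mem hu, Set.ncard_diff_singleton_of_mem hv]
    have hcard : T.ncard = Z.ncard := by rw [hcT, hZc]; omega
    exact G.span_basis hTS hSfin hZb hspan hcard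
  · intro v hv w hw
    set T : Set X := U ∪ (V \ {v}) ∪ (W \ {w}) with hT
    have hTS : T ⊆ U ∪ V ∪ W :=
      Set.union_subset_union (Set.union_subset_union_right _ Set.diff_subset) Set.diff_subset
    have hvU : v ∉ U := Set.disjoint_right.mp hUV hv
    have hwV : w ∉ V := Set.disjoint_right.mp hVW hw
    have hUVv : (U ∪ V) \ {v} = U ∪ (V \ {v}) := by
      rw [Set.union_diff_distrib, Set.diff_singleton_eq_self hvU]
    have hvT : v ∈ G.cl T := by
      have := G.circuit_cl hmd1 (Set.mem_union_right _ hv)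
      rw [hUVv] at this
      exact G.mono Set.subset_union_left this
    have hVT : V ⊆ G.cl T := by
      intro y hy
      by_cases hyv : y = v
      · subst hyv; exact hvT
      · exact G.subset_cl _ (Or.inl (Or.inr ((Set.mem_diff _).mpr ⟨hy, by simpa using hyv⟩)))
    have hVWw : (V ∪ W) \ {w} = V ∪ (W \ {w}) := by
      rw [Set.union_diff_distrib, Set.diff_singleton_eq_self hwV]
    have hwT : w ∈ G.cl T := by
      have h1 := G.circuit_cl hmd2 (Set.mem_union_right _ hw)
      rw [hVWw] at h1
      refine G.cl_le ?_ h1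
      rintro y (hy | hy)
      · exact hVT hy
      · exact G.subset_cl _ (Or.inr hy)
    have hspan : U ∪ V ∪ W ⊆ G.cl T := by
      rintro y ((hy | hy) | hy)
      · exact G.subset_cl _ (Or.inl (Or.inl hy))
      · exact hVT hy
      · by_cases hyw : y = w
        · subst hyw; exact hwT
        · exact G.subset_cl _ (Or.inr ((Set.mem_diff _).mpr ⟨hy, by simpa using hyw⟩))
    have hd1 : Disjoint U (V \ {v}) := hUV.mono_right Set.diff_subset
    have hd2 : Disjoint (U ∪ (V \ {v})) (W \ {w}) :=
      Set.disjoint_union_left.mpr ⟨hUW.mono_right Set.diff_subset,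
        (hVW.mono Set.diff_subset Set.diff_subset)⟩
    have hcT : T.ncard = U.ncard + (V.ncard - 1) + (W.ncard - 1) := by
      rw [hT, Set.ncard_union_eq hd2 (hUfin.union (hVfin.diff)) (hWfin.diff),
        Set.ncard_union_eq hd1 hUfin (hVfin.diff),
        Set.ncard_diff_singleton_of_mem hv, Set.ncard_diff_singleton_of_mem hw]
    have hcard : T.ncard = Z.ncard := by rw [hcT, hZc]; omega
    exact G.span_basis hTS hSfin hZb hspan hcard
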